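/- Let H be a nontrivial complex Hilbert space, let A be a bounded self-adjoint operator on H, and let V be a pure isometry on H such that V* ∘ A = A ∘ V. Then A is not invertible, i.e. A is not a unit of the ring of bounded operators on H. -/

import Mathlib

open ContinuousLinearMap Filter

theorem hankel_wrt_pure_isometry_not_invertible
    {H : Type*} [NormedAddCommGroup H] [InnerProductSpace ℂ H] [CompleteSpace H]
    [Nontrivial H]
    (A V : H →L[ℂ] H)
    (hA : IsSelfAdjoint A)
    (hV : adjoint V ∘L V = 1)
    (hVpure : ∀ h : H, Tendsto (fun n : ℕ => ((adjoint V) ^ n) h) atTop (nhds 0))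
    (hHankel : adjoint V ∘L A = A ∘L V) :
    ¬ IsUnit A := by
  intro hU
  -- left inverse B of A
  obtain ⟨u, hu⟩ := hU
  set B : H →L[ℂ] H := (↑u⁻¹ : H →L[ℂ] H) with hBdef
  have hB : ∀ y : H, B (A y) = y := by
    intro y
    have : (↑u⁻¹ * ↑u : H →L[ℂ] H) y = y := by
      rw [u.inv_mul]; rfl
    simpa [hu, hBdef, ContinuousLinearMap.mul_apply] using this
  -- V^n preserves norms
  have hiso : ∀ x : H, ‖V x‖ = ‖x‖ := by
    intro x
    have h1 : (adjoint V) (V x) = x := by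
      have := congrArg (fun T : H →L[ℂ] H => T x) hV
      simpa using this
    have h2 : (inner ℂ (V x) (V x) : ℂ) = inner ℂ x x := by
      rw [← ContinuousLinearMap.adjoint_inner_left, h1]
    have h3 : ‖V x‖ ^ 2 = ‖x‖ ^ 2 := by
      have := congrArg (RCLike.re (K := ℂ)) h2
      rwa [inner_self_eq_norm_sq, inner_self_eq_norm_sq] at this
    nlinarith [norm_nonneg (V x), norm_nonneg x]
  have hison : ∀ (n : ℕ) (x : H), ‖(V ^ n) x‖ = ‖x‖ := by
    intro n
    induction n with
    | zero => intro x; simp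
    | succ n ih =>
      intro x
      rw [pow_succ, ContinuousLinearMap.mul_apply, ih, hiso]
  -- A ∘ V^n = (V*)^n ∘ A
  have key : ∀ (n : ℕ) (x : H), A ((V ^ n) x) = ((adjoint V) ^ n) (A x) := by
    intro n
    induction n with
    | zero => intro x; simp
    | succ n ih =>
      intro x
      have hH : ∀ y : H, (adjoint V) (A y) = A (V y) := by
        intro y
        have := congrArg (fun T : H →L[ℂ] H => T y) hHankel
        simpa using this
      calc A ((V ^ (n + 1)) x) = A ((V ^ n) (V x)) := by
            rw [pow_succ, ContinuousLinearMap.mul_apply]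
        _ = ((adjoint V) ^ n) (A (V x)) := ih (V x)
        _ = ((adjoint V) ^ n) ((adjoint V) (A x)) := by rw [hH]
        _ = ((adjoint V) ^ (n + 1)) (A x) := by
            rw [pow_succ, ContinuousLinearMap.mul_apply]
  -- pick a nonzero x
  obtain ⟨x, hx⟩ := exists_ne (0 : H)
  have h1 : Tendsto (fun n : ℕ => A ((V ^ n) x)) atTop (nhds 0) := by
    simpa only [key] using hVpure (A x)
  have h2 : Tendsto (fun n : ℕ => B (A ((V ^ n) x))) atTop (nhds 0) := by
    have := (B.continuous.tendsto 0).comp h1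
    rw [map_zero] at this
    exact this
  have h3 : Tendsto (fun n : ℕ => ‖(V ^ n) x‖) atTop (nhds 0) := by
    have := h2.norm
    simp only [hB, norm_zero] at this
    exact this
  have h4 : Tendsto (fun _ : ℕ => ‖x‖) atTop (nhds 0) := by
    simpa only [hison] using h3
  have : ‖x‖ = 0 := tendsto_nhds_unique tendsto_const_nhds h4
  exact hx (norm_eq_zero.mp this)
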